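/- Fix n ≥ 1 and m ≥ 0, and let a = (a_1,…,a_m) be a (1,2,∅)-word with empty form, i.e., every a_i ∈ {1,2} and a_i = 2 implies a_{i+n} ≠ 1 whenever i + n ≤ m. Define b = (b_1,…,b_m) by b_i = 3 − a_{m+1−i} (reverse the sequence and interchange 1's and 2's). Then: (i) b is again a (1,2,∅)-word with empty form; (ii) the weight of b is (μ_2, μ_1) where (μ_1, μ_2) is the weight of a; (iii) linv_n(b) = linv_n(a); and (iv) the map a ↦ b is an involution. Consequently, Σ_a q^{linv_n(a)} over words of length m, empty form and weight (μ_1, μ_2) equals Σ_b q^{linv_n(b)} over words of length m, empty form and weight (μ_2, μ_1). -/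
import Mathlib


open Finset

attribute [local instance] Classical.propDecidable

/-- A `(1,2,∅)`-word of length `m`, where the letter `∅` is encoded by `0`:
all letters lie in `{0,1,2}` and a `2` in position `i` forbids a `1` in position `i + n`. -/
def IsWord (n m : ℕ) (a : Fin m → ℕ) : Prop :=
  (∀ i, a i ≤ 2) ∧ ∀ i j : Fin m, (j : ℕ) = (i : ℕ) + n → a i = 2 → a j ≠ 1

/-- The form of a word: the set of positions holding the letter `∅` (encoded `0`). -/
def form (m : ℕ) (a : Fin m → ℕ) : Finset (Fin m) :=
  Finset.univ.filter fun i => a i = 0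

/-- The number of `n`-local inversions: pairs `i < j` with `j - i < n`, `a i = 2`,
`a j = 1`. -/
def linv (n m : ℕ) (a : Fin m → ℕ) : ℕ :=
  ((Finset.univ ×ˢ Finset.univ : Finset (Fin m × Fin m)).filter fun p =>
    (p.1 : ℕ) < (p.2 : ℕ) ∧ (p.2 : ℕ) - (p.1 : ℕ) < n ∧ a p.1 = 2 ∧ a p.2 = 1).card

/-- The `(1,2,∅)`-words of length `m` with form `F` and weight `(μ₁, μ₂)`. -/
noncomputable def words (n m : ℕ) (F : Finset (Fin m)) (μ₁ μ₂ : ℕ) :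
    Finset (Fin m → ℕ) :=
  (Fintype.piFinset fun _ : Fin m => ({0, 1, 2} : Finset ℕ)).filter fun a =>
    IsWord n m a ∧ form m a = F ∧
    (Finset.univ.filter fun i => a i = 1).card = μ₁ ∧
    (Finset.univ.filter fun i => a i = 2).card = μ₂

/-- Reverse a word and interchange the letters `1` and `2`. -/
def revMap (m : ℕ) (a : Fin m → ℕ) : Fin m → ℕ := fun i => 3 - a i.rev

section Aux

variable {n m : ℕ}

lemma revMap_mem {a : Fin m → ℕ} (h : ∀ i, a i = 1 ∨ a i = 2) (i : Fin m) :
    revMap m a i = 1 ∨ revMap m a i = 2 := by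
  rcases h i.rev with h' | h' <;> simp [revMap, h']

lemma revMap_eq_one {a : Fin m → ℕ} (h : ∀ i, a i = 1 ∨ a i = 2) (i : Fin m) :
    revMap m a i = 1 ↔ a i.rev = 2 := by
  rcases h i.rev with h' | h' <;> simp [revMap, h']

lemma revMap_eq_two {a : Fin m → ℕ} (h : ∀ i, a i = 1 ∨ a i = 2) (i : Fin m) :
    revMap m a i = 2 ↔ a i.rev = 1 := by
  rcases h i.rev with h' | h' <;> simp [revMap, h']

lemma revMap_cond {a : Fin m → ℕ} (h1 : ∀ i, a i = 1 ∨ a i = 2)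
    (h2 : ∀ i j : Fin m, (j : ℕ) = (i : ℕ) + n → a i = 2 → a j ≠ 1)
    (i j : Fin m) (hij : (j : ℕ) = (i : ℕ) + n) (hi : revMap m a i = 2) :
    revMap m a j ≠ 1 := by
  rw [revMap_eq_two h1] at hi
  rw [Ne, revMap_eq_one h1]
  intro hj
  have hvi := Fin.val_rev i
  have hvj := Fin.val_rev j
  have h' : (i.rev : ℕ) = (j.rev : ℕ) + n := by
    have := i.isLt; have := j.isLt; omega
  exact h2 j.rev i.rev h' hj hi

lemma revMap_involutive {a : Fin m → ℕ} (h : ∀ i, a i = 1 ∨ a i = 2) :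
    revMap m (revMap m a) = a := by
  funext i
  rcases h i with h' | h' <;> simp [revMap, Fin.rev_rev, h']

lemma revMap_card_one {a : Fin m → ℕ} (h : ∀ i, a i = 1 ∨ a i = 2) :
    (Finset.univ.filter fun i => revMap m a i = 1).card =
      (Finset.univ.filter fun i => a i = 2).card := by
  apply Finset.card_bij' (fun i _ => Fin.rev i) (fun i _ => Fin.rev i)
  · intro i hi
    simp only [mem_filter, mem_univ, true_and] at hi ⊢
    exact (revMap_eq_one h i).mp hi
  · intro i hi
    simp only [mem_filter, mem_univ, true_and] at hi ⊢
    rw [revMap_eq_one h, Fin.rev_rev]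
    exact hi
  · intro i _; exact Fin.rev_rev i
  · intro i _; exact Fin.rev_rev i

lemma revMap_card_two {a : Fin m → ℕ} (h : ∀ i, a i = 1 ∨ a i = 2) :
    (Finset.univ.filter fun i => revMap m a i = 2).card =
      (Finset.univ.filter fun i => a i = 1).card := by
  apply Finset.card_bij' (fun i _ => Fin.rev i) (fun i _ => Fin.rev i)
  · intro i hi
    simp only [mem_filter, mem_univ, true_and] at hi ⊢
    exact (revMap_eq_two h i).mp hi
  · intro i hi
    simp only [mem_filter, mem_univ, true_and] at hi ⊢
    rw [revMap_eq_two h, Fin.rev_rev]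
    exact hi
  · intro i _; exact Fin.rev_rev i
  · intro i _; exact Fin.rev_rev i

lemma linv_rev {a : Fin m → ℕ} (h : ∀ i, a i = 1 ∨ a i = 2) :
    linv n m (revMap m a) = linv n m a := by
  unfold linv
  apply Finset.card_bij' (fun p _ => (p.2.rev, p.1.rev)) (fun p _ => (p.2.rev, p.1.rev))
  · intro p _
    ext <;> simp [Fin.rev_rev]
  · intro p _
    ext <;> simp [Fin.rev_rev]
  · intro p hp
    simp only [mem_filter, mem_product, mem_univ, true_and, and_true] at hp ⊢
    obtain ⟨h1, h2, h3, h4⟩ := hp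
    rw [revMap_eq_two h] at h3
    rw [revMap_eq_one h] at h4
    have hv1 := Fin.val_rev p.1
    have hv2 := Fin.val_rev p.2
    have := p.1.isLt; have := p.2.isLt
    refine ⟨?_, by omega, h4, h3⟩
    omega
  · intro p hp
    simp only [mem_filter, mem_product, mem_univ, true_and, and_true] at hp ⊢
    obtain ⟨h1, h2, h3, h4⟩ := hp
    rw [revMap_eq_two h, revMap_eq_one h, Fin.rev_rev, Fin.rev_rev]
    have hv1 := Fin.val_rev p.1
    have hv2 := Fin.val_rev p.2
    have := p.1.isLt; have := p.2.isLt
    refine ⟨?_, by omega, h4, h3⟩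
    omega

lemma mem_words_empty {a : Fin m → ℕ} {μ₁ μ₂ : ℕ}
    (ha : a ∈ words n m ∅ μ₁ μ₂) :
    (∀ i, a i = 1 ∨ a i = 2) ∧
      (∀ i j : Fin m, (j : ℕ) = (i : ℕ) + n → a i = 2 → a j ≠ 1) ∧
      (Finset.univ.filter fun i => a i = 1).card = μ₁ ∧
      (Finset.univ.filter fun i => a i = 2).card = μ₂ := by
  simp only [words, mem_filter, Fintype.mem_piFinset] at ha
  obtain ⟨hpi, ⟨hle, hcond⟩, hform, h1, h2⟩ := ha
  have hne : ∀ i, a i ≠ 0 := by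
    intro i hi
    have : i ∈ form m a := by simp [form, hi]
    rw [hform] at this
    exact absurd this (Finset.notMem_empty i)
  exact ⟨fun i => by have := hle i; have := hne i; omega, hcond, h1, h2⟩

lemma revMap_mem_words {a : Fin m → ℕ} {μ₁ μ₂ : ℕ}
    (ha : a ∈ words n m ∅ μ₁ μ₂) : revMap m a ∈ words n m ∅ μ₂ μ₁ := by
  obtain ⟨h12, hcond, h1, h2⟩ := mem_words_empty ha
  simp only [words, mem_filter, Fintype.mem_piFinset]
  refine ⟨?_, ⟨?_, revMap_cond h12 hcond⟩, ?_, ?_, ?_⟩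
  · intro i; rcases revMap_mem h12 i with h' | h' <;> simp [h']
  · intro i; rcases revMap_mem h12 i with h' | h' <;> omega
  · rw [Finset.eq_empty_iff_forall_notMem]
    intro i hi
    simp only [form, mem_filter] at hi
    rcases revMap_mem h12 i with h' | h' <;> omega
  · rw [revMap_card_one h12, h2]
  · rw [revMap_card_two h12, h1]

end Aux

/-- for a `(1,2,∅)`-word `a` with empty form, the word
`b i = 3 - a (rev i)` is again such a word (i), has the interchanged weight (ii), has
the same number of `n`-local inversions (iii), and `a ↦ b` is an involution (iv);
consequently the `linv` generating functions for weights `(μ₁, μ₂)` and `(μ₂, μ₁)`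
over words with empty form agree. -/
theorem stmt11 (n m : ℕ) (hn : 1 ≤ n) :
    (∀ a : Fin m → ℕ, (∀ i, a i = 1 ∨ a i = 2) →
      (∀ i j : Fin m, (j : ℕ) = (i : ℕ) + n → a i = 2 → a j ≠ 1) →
      ((∀ i, revMap m a i = 1 ∨ revMap m a i = 2) ∧
        (∀ i j : Fin m, (j : ℕ) = (i : ℕ) + n → revMap m a i = 2 → revMap m a j ≠ 1) ∧
        ((Finset.univ.filter fun i => revMap m a i = 1).card =
            (Finset.univ.filter fun i => a i = 2).card ∧
          (Finset.univ.filter fun i => revMap m a i = 2).card =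
            (Finset.univ.filter fun i => a i = 1).card) ∧
        linv n m (revMap m a) = linv n m a ∧
        revMap m (revMap m a) = a)) ∧
    ∀ μ₁ μ₂ : ℕ,
      ∑ a ∈ words n m ∅ μ₁ μ₂, (Polynomial.X : Polynomial ℤ) ^ linv n m a =
        ∑ b ∈ words n m ∅ μ₂ μ₁, (Polynomial.X : Polynomial ℤ) ^ linv n m b := by
  constructor
  · intro a h1 h2
    exact ⟨revMap_mem h1, revMap_cond h1 h2, ⟨revMap_card_one h1, revMap_card_two h1⟩,
      linv_rev h1, revMap_involutive h1⟩
  · intro μ₁ μ₂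
    apply Finset.sum_bij' (fun a _ => revMap m a) (fun b _ => revMap m b)
    · intro a ha; exact revMap_mem_words ha
    · intro b hb; exact revMap_mem_words hb
    · intro a ha; exact revMap_involutive (mem_words_empty ha).1
    · intro b hb; exact revMap_involutive (mem_words_empty hb).1
    · intro a ha; rw [linv_rev (mem_words_empty ha).1]
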